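/- Let Y be a finite distributive lattice realized as a sublattice of a finite powerset, X₁,…,Xₙ finite sets with distinguished elements 0,1, and f : ∏ X_i → Y. Then f factorizes as f(x) = p(φ₁(x₁),…,φₙ(xₙ)) for some lattice polynomial function p : Y^n → Y and maps φ_k : X_k → Y satisfying the boundary condition φ_k(0) ≤ φ_k(a) ≤ φ_k(1), if and only if f satisfies the boundary condition f(x_k^0) ≤ f(x) ≤ f(x_k^1) for all k, x, and Φ_k^- ≤ Φ_k^+ for all k, where Φ_k^-(a) = ⋁_{x_k=a} cl( f(x) ∧ f(x_k^0)ᶜ ) and Φ_k^+(a) = ⋀_{x_k=a} int( f(x) ∨ f(x_k^1)ᶜ ). -/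

import Mathlib

/-- Lattice polynomial functions over the sublattice `Y` of a powerset:
built from projections and constants taken from `Y`, using `∩` and `∪`. -/
inductive IsPolyIn {U : Type*} (Y : Set (Set U)) (n : ℕ) :
    ((Fin n → Set U) → Set U) → Prop
  | proj (i : Fin n) : IsPolyIn Y n (fun y => y i)
  | const (c : Set U) (hc : c ∈ Y) : IsPolyIn Y n (fun _ => c)
  | sup {p q : (Fin n → Set U) → Set U} : IsPolyIn Y n p → IsPolyIn Y n q →
      IsPolyIn Y n (fun y => p y ∪ q y)
  | inf {p q : (Fin n → Set U) → Set U} : IsPolyIn Y n p → IsPolyIn Y n q →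
      IsPolyIn Y n (fun y => p y ∩ q y)

namespace Stmt19Aux

variable {U : Type*}

lemma poly_mono {Y : Set (Set U)} {n : ℕ} {p : (Fin n → Set U) → Set U}
    (hp : IsPolyIn Y n p) : ∀ {y y' : Fin n → Set U}, (∀ i, y i ⊆ y' i) → p y ⊆ p y' := by
  induction hp with
  | proj i => intro y y' h; exact h i
  | const c hc => intro _ _ _; exact subset_rfl
  | sup hp hq ihp ihq => intro y y' h; exact Set.union_subset_union (ihp h) (ihq h)
  | inf hp hq ihp ihq => intro y y' h; exact Set.inter_subset_inter (ihp h) (ihq h)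

lemma poly_L1 {Y : Set (Set U)} {n : ℕ} {p : (Fin n → Set U) → Set U}
    (hp : IsPolyIn Y n p) (k : Fin n) :
    ∀ {y y' : Fin n → Set U}, (∀ i, i ≠ k → y i = y' i) → p y' ⊆ p y ∪ y' k := by
  induction hp with
  | proj i =>
    intro y y' h
    by_cases hik : i = k
    · subst hik; exact Set.subset_union_right
    · show y' i ⊆ y i ∪ y' k
      rw [h i hik]; exact Set.subset_union_left
  | const c hc => intro _ _ _; exact Set.subset_union_left
  | sup hp hq ihp ihq =>
    intro y y' h u hu
    rcases hu with hu | hu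
    · rcases ihp h hu with h' | h'
      · exact Or.inl (Or.inl h')
      · exact Or.inr h'
    · rcases ihq h hu with h' | h'
      · exact Or.inl (Or.inr h')
      · exact Or.inr h'
  | inf hp hq ihp ihq =>
    intro y y' h u hu
    rcases ihp h hu.1 with h' | h'
    · rcases ihq h hu.2 with h'' | h''
      · exact Or.inl ⟨h', h''⟩
      · exact Or.inr h''
    · exact Or.inr h'

lemma poly_L2 {Y : Set (Set U)} {n : ℕ} {p : (Fin n → Set U) → Set U}
    (hp : IsPolyIn Y n p) (k : Fin n) :
    ∀ {y y' : Fin n → Set U}, (∀ i, i ≠ k → y i = y' i) → y k ∩ p y' ⊆ p y := by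
  induction hp with
  | proj i =>
    intro y y' h
    by_cases hik : i = k
    · subst hik; exact Set.inter_subset_left
    · show y k ∩ y' i ⊆ y i
      rw [← h i hik]; exact Set.inter_subset_right
  | const c hc => intro _ _ _; exact Set.inter_subset_right
  | sup hp hq ihp ihq =>
    intro y y' h u hu
    rcases hu.2 with h' | h'
    · exact Or.inl (ihp h ⟨hu.1, h'⟩)
    · exact Or.inr (ihq h ⟨hu.1, h'⟩)
  | inf hp hq ihp ihq =>
    intro y y' h u hu
    exact ⟨ihp h ⟨hu.1, hu.2.1⟩, ihq h ⟨hu.1, hu.2.2⟩⟩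

lemma sInter_mem [Finite U] {Y : Set (Set U)} (h1 : Set.univ ∈ Y)
    (hcap : ∀ a ∈ Y, ∀ b ∈ Y, a ∩ b ∈ Y) (T : Set (Set U)) (hT : T ⊆ Y) : ⋂₀ T ∈ Y := by
  refine Set.Finite.induction_on (motive := fun T _ => T ⊆ Y → ⋂₀ T ∈ Y) T (Set.toFinite T)
    (fun _ => by simpa using h1) ?_ hT
  intro a s ha hs ih hsub
  rw [Set.sInter_insert]
  exact hcap a (hsub (Set.mem_insert a s)) _ (ih (fun b hb => hsub (Set.mem_insert_of_mem a hb)))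

lemma sUnion_mem [Finite U] {Y : Set (Set U)} (h0 : ∅ ∈ Y)
    (hcup : ∀ a ∈ Y, ∀ b ∈ Y, a ∪ b ∈ Y) (T : Set (Set U)) (hT : T ⊆ Y) : ⋃₀ T ∈ Y := by
  refine Set.Finite.induction_on (motive := fun T _ => T ⊆ Y → ⋃₀ T ∈ Y) T (Set.toFinite T)
    (fun _ => by simpa using h0) ?_ hT
  intro a s ha hs ih hsub
  rw [Set.sUnion_insert]
  exact hcup a (hsub (Set.mem_insert a s)) _ (ih (fun b hb => hsub (Set.mem_insert_of_mem a hb)))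


section CLINT
variable [Finite U] {Y : Set (Set U)} {cl int : Set U → Set U}
  (h0 : ∅ ∈ Y) (h1 : Set.univ ∈ Y)
  (hcup : ∀ a ∈ Y, ∀ b ∈ Y, a ∪ b ∈ Y) (hcap : ∀ a ∈ Y, ∀ b ∈ Y, a ∩ b ∈ Y)
  (hcl : ∀ S, cl S = ⋂₀ {y | y ∈ Y ∧ S ⊆ y})
  (hint : ∀ S, int S = ⋃₀ {y | y ∈ Y ∧ y ⊆ S})

include h1 hcap hcl in
lemma cl_mem (S : Set U) : cl S ∈ Y := by
  rw [hcl]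
  exact sInter_mem h1 hcap _ (fun y hy => hy.1)

include hcl in
lemma subset_cl (S : Set U) : S ⊆ cl S := by
  rw [hcl]
  exact fun u hu => Set.mem_sInter.2 fun y hy => hy.2 hu

include hcl in
lemma cl_min {S W : Set U} (hW : W ∈ Y) (hSW : S ⊆ W) : cl S ⊆ W := by
  rw [hcl]
  exact Set.sInter_subset_of_mem ⟨hW, hSW⟩

include h1 hcap hcl in
lemma cl_mono {S T : Set U} (hST : S ⊆ T) : cl S ⊆ cl T :=
  cl_min hcl (cl_mem h1 hcap hcl T) (hST.trans (subset_cl hcl T))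

include h0 hcup hint in
lemma int_mem (S : Set U) : int S ∈ Y := by
  rw [hint]
  exact sUnion_mem h0 hcup _ (fun y hy => hy.1)

include hint in
lemma int_subset (S : Set U) : int S ⊆ S := by
  rw [hint]
  exact Set.sUnion_subset fun y hy => hy.2

include hint in
lemma int_max {S W : Set U} (hW : W ∈ Y) (hWS : W ⊆ S) : W ⊆ int S := by
  rw [hint]
  exact Set.subset_sUnion_of_mem ⟨hW, hWS⟩

end CLINT

lemma poly_biUnion {Y : Set (Set U)} {n : ℕ} (h0 : ∅ ∈ Y) {ι : Type*} [DecidableEq ι]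
    (s : Finset ι) (g : ι → (Fin n → Set U) → Set U)
    (hg : ∀ i ∈ s, IsPolyIn Y n (g i)) :
    IsPolyIn Y n (fun y => ⋃ i ∈ s, g i y) := by
  induction s using Finset.induction_on with
  | empty => simpa using IsPolyIn.const ∅ h0
  | insert a s ha ih =>
    have h1 := hg a (Finset.mem_insert_self a s)
    have h2 := ih (fun i hi => hg i (Finset.mem_insert_of_mem hi))
    have := IsPolyIn.sup h1 h2
    simpa [Set.biUnion_insert] using this

lemma poly_biInter {Y : Set (Set U)} {n : ℕ} (h1 : Set.univ ∈ Y) {ι : Type*} [DecidableEq ι]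
    (s : Finset ι) (g : ι → (Fin n → Set U) → Set U)
    (hg : ∀ i ∈ s, IsPolyIn Y n (g i)) :
    IsPolyIn Y n (fun y => ⋂ i ∈ s, g i y) := by
  induction s using Finset.induction_on with
  | empty => simpa using IsPolyIn.const Set.univ h1
  | insert a s ha ih =>
    have hh1 := hg a (Finset.mem_insert_self a s)
    have hh2 := ih (fun i hi => hg i (Finset.mem_insert_of_mem hi))
    have := IsPolyIn.inf hh1 hh2
    simpa [Set.biInter_insert] using this

section Chain

variable {n : ℕ} {X : Fin n → Type*} {P : (∀ k, X k) → Prop}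

lemma chain (g : ∀ k, X k) (T : Finset (Fin n)) (x : ∀ k, X k)
    (hstep : ∀ (w : ∀ k, X k) (k : Fin n), k ∈ T → w k = x k → P w →
      P (Function.update w k (g k)))
    (hx : P x) : P (fun i => if i ∈ T then g i else x i) := by
  induction T using Finset.induction_on with
  | empty => simpa using hx
  | insert a T ha ih =>
    have hmid : P (fun i => if i ∈ T then g i else x i) :=
      ih (fun w k hk => hstep w k (Finset.mem_insert_of_mem hk))
    have := hstep _ a (Finset.mem_insert_self a T) (by simp [ha]) hmid
    have heq : Function.update (fun i => if i ∈ T then g i else x i) a (g a) =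
        (fun i => if i ∈ insert a T then g i else x i) := by
      funext i
      by_cases hia : i = a
      · subst hia; simp
      · simp [Function.update_of_ne hia, Finset.mem_insert, hia]
    rwa [heq] at this

lemma chainRev (g : ∀ k, X k) (T : Finset (Fin n)) (x : ∀ k, X k)
    (hstep : ∀ (w : ∀ k, X k) (k : Fin n), k ∈ T → w k = x k →
      P (Function.update w k (g k)) → P w)
    (hx : P (fun i => if i ∈ T then g i else x i)) : P x := by
  induction T using Finset.induction_on with
  | empty => simpa using hx
  | insert a T ha ih =>
    have heq : Function.update (fun i => if i ∈ T then g i else x i) a (g a) =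
        (fun i => if i ∈ insert a T then g i else x i) := by
      funext i
      by_cases hia : i = a
      · subst hia; simp
      · simp [Function.update_of_ne hia, Finset.mem_insert, hia]
    rw [← heq] at hx
    have hmid : P (fun i => if i ∈ T then g i else x i) :=
      hstep _ a (Finset.mem_insert_self a T) (by simp [ha]) hx
    exact ih (fun w k hk => hstep w k (Finset.mem_insert_of_mem hk)) hmid

end Chain

end Stmt19Aux


theorem stmt_19 {U : Type*} [Fintype U] (Y : Set (Set U))
    (h0 : ∅ ∈ Y) (h1 : Set.univ ∈ Y)
    (hcup : ∀ a ∈ Y, ∀ b ∈ Y, a ∪ b ∈ Y) (hcap : ∀ a ∈ Y, ∀ b ∈ Y, a ∩ b ∈ Y)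
    (cl int : Set U → Set U)
    (hcl : ∀ S, cl S = ⋂₀ {y | y ∈ Y ∧ S ⊆ y})
    (hint : ∀ S, int S = ⋃₀ {y | y ∈ Y ∧ y ⊆ S})
    {n : ℕ} (X : Fin n → Type*) [∀ k, Fintype (X k)]
    (x0 x1 : ∀ k, X k) (hx : ∀ k, x0 k ≠ x1 k)
    (f : (∀ k, X k) → Set U) (hfY : ∀ x, f x ∈ Y)
    (Φm Φp : ∀ k : Fin n, X k → Set U)
    (hΦm : ∀ k a, Φm k a = ⋃ x ∈ {x : ∀ i, X i | x k = a},
      cl (f x ∩ (f (Function.update x k (x0 k)))ᶜ))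
    (hΦp : ∀ k a, Φp k a = ⋂ x ∈ {x : ∀ i, X i | x k = a},
      int (f x ∪ (f (Function.update x k (x1 k)))ᶜ)) :
    (∃ (p : (Fin n → Set U) → Set U) (φ : ∀ k : Fin n, X k → Set U),
        IsPolyIn Y n p ∧ (∀ k a, φ k a ∈ Y) ∧
        (∀ k (a : X k), φ k (x0 k) ⊆ φ k a ∧ φ k a ⊆ φ k (x1 k)) ∧
        ∀ x : ∀ k, X k, f x = p (fun i => φ i (x i)))
    ↔ ((∀ (x : ∀ k, X k) (k : Fin n),
          f (Function.update x k (x0 k)) ⊆ f x ∧ f x ⊆ f (Function.update x k (x1 k))) ∧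
        ∀ k a, Φm k a ⊆ Φp k a) := by
  classical
  constructor
  · rintro ⟨p, φ, hp, hφY, hφb, hfeq⟩
    constructor
    · intro x k
      constructor
      · rw [hfeq, hfeq]
        apply Stmt19Aux.poly_mono hp
        intro i
        by_cases hik : i = k
        · subst hik
          rw [Function.update_self]
          exact (hφb i (x i)).1
        · rw [Function.update_of_ne hik]
      · rw [hfeq, hfeq]
        apply Stmt19Aux.poly_mono hp
        intro i
        by_cases hik : i = k
        · subst hik
          rw [Function.update_self]
          exact (hφb i (x i)).2
        · rw [Function.update_of_ne hik]
    · intro k a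
      rw [hΦm, hΦp]
      intro u hu
      obtain ⟨x, hxk, hux⟩ := Set.mem_iUnion₂.1 hu
      refine Set.mem_iInter₂.2 fun z hzk => ?_
      have hxk : x k = a := hxk
      have hzk : z k = a := hzk
      -- cl (f x ∩ (f x⁰)ᶜ) ⊆ φ k a
      have sub1 : cl (f x ∩ (f (Function.update x k (x0 k)))ᶜ) ⊆ φ k a := by
        apply Stmt19Aux.cl_min hcl (hφY k a)
        have hL1 := Stmt19Aux.poly_L1 hp k
          (y := fun i => φ i (Function.update x k (x0 k) i)) (y' := fun i => φ i (x i))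
          (fun i hik => by
            show φ i (Function.update x k (x0 k) i) = φ i (x i)
            rw [Function.update_of_ne hik])
        intro v hv
        have hv1 : v ∈ p (fun i => φ i (x i)) := by rw [← hfeq]; exact hv.1
        rcases hL1 hv1 with h | h
        · exfalso
          rw [← hfeq] at h
          exact hv.2 h
        · have h' : v ∈ φ k (x k) := h
          rwa [hxk] at h'
      -- φ k a ⊆ int (f z ∪ (f z¹)ᶜ)
      have sub2 : φ k a ⊆ int (f z ∪ (f (Function.update z k (x1 k)))ᶜ) := by
        apply Stmt19Aux.int_max hint (hφY k a)
        have hL2 := Stmt19Aux.poly_L2 hp k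
          (y := fun i => φ i (z i)) (y' := fun i => φ i (Function.update z k (x1 k) i))
          (fun i hik => by
            show φ i (z i) = φ i (Function.update z k (x1 k) i)
            rw [Function.update_of_ne hik])
        intro v hv
        by_cases hmem : v ∈ f (Function.update z k (x1 k))
        · left
          have hv1 : v ∈ φ k (z k) := by rwa [hzk]
          have hv2 : v ∈ p (fun i => φ i (Function.update z k (x1 k) i)) := by
            rw [← hfeq]; exact hmem
          have := hL2 ⟨hv1, hv2⟩
          rw [hfeq z]
          exact this
        · right; exact hmem
      exact sub2 (sub1 hux)
  · rintro ⟨hbf, hmp⟩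
    -- the "boundary points" indexed by subsets
    refine ⟨fun y => ⋃ S ∈ (Finset.univ : Finset (Finset (Fin n))),
        ((f fun i => if i ∈ S then x1 i else x0 i) ∩ ⋂ k ∈ S, y k), Φm, ?_, ?_, ?_, ?_⟩
    · -- polynomial
      apply Stmt19Aux.poly_biUnion h0
      intro S _
      exact IsPolyIn.inf (IsPolyIn.const _ (hfY _))
        (Stmt19Aux.poly_biInter h1 S (fun k y => y k) (fun k _ => IsPolyIn.proj k))
    · -- values in Y
      intro k a
      rw [hΦm, ← Set.sUnion_image]
      apply Stmt19Aux.sUnion_mem h0 hcup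
      rintro _ ⟨x, hx', rfl⟩
      exact Stmt19Aux.cl_mem h1 hcap hcl _
    · -- boundary condition for Φm
      intro k a
      constructor
      · intro u hu
        exfalso
        rw [hΦm] at hu
        obtain ⟨x, hxk, hux⟩ := Set.mem_iUnion₂.1 hu
        have hxk : x k = x0 k := hxk
        have hupd : Function.update x k (x0 k) = x := by
          rw [← hxk]; exact Function.update_eq_self k x
        rw [hupd, Set.inter_compl_self] at hux
        exact (Stmt19Aux.cl_min hcl h0 subset_rfl) hux
      · intro u hu
        rw [hΦm] at hu ⊢
        obtain ⟨x, hxk, hux⟩ := Set.mem_iUnion₂.1 hu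
        refine Set.mem_iUnion₂.2 ⟨Function.update x k (x1 k), Function.update_self k _ x, ?_⟩
        rw [Function.update_idem]
        refine Stmt19Aux.cl_mono h1 hcap hcl ?_ hux
        exact Set.inter_subset_inter_left _ ((hbf x k).2)
    · -- main factorization identity
      intro x
      ext u
      constructor
      · intro hu
        set S : Finset (Fin n) := Finset.univ.filter (fun k => u ∈ Φm k (x k)) with hS
        refine Set.mem_iUnion₂.2 ⟨S, Finset.mem_univ S, ?_, ?_⟩
        · -- u ∈ f (eS S)
          have stepA : ∀ (w : ∀ k, X k) (k : Fin n), k ∈ Sᶜ → w k = x k → u ∈ f w →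
              u ∈ f (Function.update w k (x0 k)) := by
            intro w k hk hwk hw
            have hknot : u ∉ Φm k (x k) := by
              intro hmem
              exact (Finset.mem_compl.1 hk) (Finset.mem_filter.2 ⟨Finset.mem_univ k, hmem⟩)
            by_contra hnot
            apply hknot
            rw [hΦm]
            exact Set.mem_iUnion₂.2 ⟨w, hwk, Stmt19Aux.subset_cl hcl _ ⟨hw, hnot⟩⟩
          have hz := Stmt19Aux.chain (P := fun w => u ∈ f w) x0 Sᶜ x stepA hu
          have stepB : ∀ (w : ∀ k, X k) (k : Fin n), k ∈ S →
              w k = (fun i => if i ∈ Sᶜ then x0 i else x i) k → u ∈ f w →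
              u ∈ f (Function.update w k (x1 k)) := fun w k _ _ hw => (hbf w k).2 hw
          have hfin := Stmt19Aux.chain (P := fun w => u ∈ f w) x1 S _ stepB hz
          have heq : (fun i => if i ∈ S then x1 i else
              (fun i => if i ∈ Sᶜ then x0 i else x i) i) =
              (fun i => if i ∈ S then x1 i else x0 i) := by
            funext i
            by_cases hiS : i ∈ S
            · simp [hiS]
            · simp [hiS, Finset.mem_compl]
          rwa [heq] at hfin
        · -- u ∈ ⋂ k ∈ S, Φm k (x k)
          refine Set.mem_iInter₂.2 fun k hk => ?_
          exact (Finset.mem_filter.1 hk).2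
      · intro hu
        obtain ⟨S, -, hu1, hu2⟩ := Set.mem_iUnion₂.1 hu
        have hiter : ∀ k ∈ S, u ∈ Φm k (x k) := fun k hk => Set.mem_iInter₂.1 hu2 k hk
        -- step 1 : from e_S to x raised on S
        have step1 : ∀ (w : ∀ k, X k) (k : Fin n), k ∈ Sᶜ →
            w k = (fun i => if i ∈ S then x1 i else x i) k →
            u ∈ f (Function.update w k (x0 k)) → u ∈ f w :=
          fun w k _ _ hupd => (hbf w k).1 hupd
        have heq : (fun i => if i ∈ Sᶜ then x0 i else
            (fun i => if i ∈ S then x1 i else x i) i) =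
            (fun i => if i ∈ S then x1 i else x0 i) := by
          funext i
          by_cases hiS : i ∈ S
          · simp [hiS]
          · simp [hiS, Finset.mem_compl]
        have hx' : u ∈ f (fun i => if i ∈ S then x1 i else x i) := by
          apply Stmt19Aux.chainRev (P := fun w => u ∈ f w) x0 Sᶜ _ step1
          rw [heq]
          exact hu1
        -- step 2 : lower the S coordinates back from x1 to x
        have step2 : ∀ (w : ∀ k, X k) (k : Fin n), k ∈ S → w k = x k →
            u ∈ f (Function.update w k (x1 k)) → u ∈ f w := by
          intro w k hk hwk hupd
          have h1' : u ∈ Φp k (x k) := hmp k (x k) (hiter k hk)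
          rw [hΦp] at h1'
          have h2' := Set.mem_iInter₂.1 h1' w hwk
          have h3' := Stmt19Aux.int_subset hint _ h2'
          rcases h3' with h | h
          · exact h
          · exact absurd hupd h
        exact Stmt19Aux.chainRev (P := fun w => u ∈ f w) x1 S x step2 hx'
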